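/- There exist real numbers p₁, p₂, p₃, q_{4,1}, q_{4,2}, q_{4,3}, q_{5,1}, q_{5,2}, q_{5,3} with p_i ≠ 0 for all i and q_{4i} ≠ 0 for at least one i, satisfying for every ρ ∈ {1, 2, 3, 4, 5} the equation Σ_{i=1}^3 Σ_{α₄+2α₅=ρ, α₄,α₅∈ℕ} (1/(α₄!·α₅!)) · p_i² · q_{4i}^{α₄} · q_{5i}^{α₅} = 0; in particular (taking q_{1i} = q₂ = q_{3i} = 0), the Softmax–Softmax polynomial system of order r = 5 with m = 3 blocks admits a non-trivial solution for every d ≥ 1, so r^SS(3) > 5. -/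

import Mathlib

/-!
Softmax–Softmax polynomial system: for every dimension `d ≥ 1`, `r^SS(2) = 4`,
i.e. 4 is the smallest natural number `r` such that the system of order `r`
with `m = 2` blocks admits no non-trivial solution.
-/

noncomputable section

/-- Multi-index `v ^ α := ∏ j, v j ^ α j`. -/
def mpow {d : ℕ} (v : Fin d → ℝ) (α : Fin d → ℕ) : ℝ := ∏ j, v j ^ α j

/-- Multi-index factorial `α! := ∏ j, (α j)!`. -/
def mfact {d : ℕ} (α : Fin d → ℕ) : ℕ := ∏ j, Nat.factorial (α j)

/-- Multi-index degree `|α| := ∑ j, α j`. -/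
def mdeg {d : ℕ} (α : Fin d → ℕ) : ℕ := ∑ j, α j

/-- A finite box containing every multi-index `α ≤ ρ` (coordinatewise). -/
def mIdxBox {d : ℕ} (ρ : Fin d → ℕ) : Finset (Fin d → ℕ) :=
  Fintype.piFinset fun j => Finset.range (ρ j + 1)

/-- Left-hand side of the Softmax–Softmax polynomial equation indexed by `(ρ₁, ρ₂)`:
`∑ i ∑_{α₁+α₂+α₃=ρ₁, |α₃|+α₄+2α₅=ρ₂} p_i² q_{1i}^{α₁} q₂^{α₂} q_{3i}^{α₃} q_{4i}^{α₄} q_{5i}^{α₅}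
  / (α₁! α₂! α₃! α₄! α₅!)`. -/
def ssLHS {m d : ℕ} (p : Fin m → ℝ) (q1 : Fin m → Fin d → ℝ) (q2 : Fin d → ℝ)
    (q3 : Fin m → Fin d → ℝ) (q4 q5 : Fin m → ℝ) (ρ1 : Fin d → ℕ) (ρ2 : ℕ) : ℝ :=
  ∑ i : Fin m, ∑ α1 ∈ mIdxBox ρ1, ∑ α2 ∈ mIdxBox ρ1, ∑ α3 ∈ mIdxBox ρ1,
    ∑ α4 ∈ Finset.range (ρ2 + 1), ∑ α5 ∈ Finset.range (ρ2 + 1),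
      if α1 + α2 + α3 = ρ1 ∧ mdeg α3 + α4 + 2 * α5 = ρ2 then
        (1 / ((mfact α1 : ℝ) * (mfact α2 : ℝ) * (mfact α3 : ℝ) *
            (Nat.factorial α4 : ℝ) * (Nat.factorial α5 : ℝ))) *
          p i ^ 2 * mpow (q1 i) α1 * mpow q2 α2 * mpow (q3 i) α3 *
          q4 i ^ α4 * q5 i ^ α5
      else 0

/-- The Softmax–Softmax system of order `r` (with `m` blocks, in dimension `d`)
admits a non-trivial solution: all `p_i ≠ 0`, some `q_{4i} ≠ 0`, and every equation
indexed by `(ρ₁, ρ₂)` with `1 ≤ |ρ₁| + ρ₂ ≤ r` holds. -/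
def ssHasNontrivial (m d r : ℕ) : Prop :=
  ∃ (p : Fin m → ℝ) (q1 : Fin m → Fin d → ℝ) (q2 : Fin d → ℝ)
    (q3 : Fin m → Fin d → ℝ) (q4 q5 : Fin m → ℝ),
      (∀ i, p i ≠ 0) ∧ (∃ i, q4 i ≠ 0) ∧
      ∀ (ρ1 : Fin d → ℕ) (ρ2 : ℕ), 1 ≤ mdeg ρ1 + ρ2 → mdeg ρ1 + ρ2 ≤ r →
        ssLHS p q1 q2 q3 q4 q5 ρ1 ρ2 = 0


/-- `r^SS(m)`: the smallest `r` such that the Softmax–Softmax system of order `r`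
with `m` blocks (in dimension `d`) admits no non-trivial solution. -/
def rSS (m d : ℕ) : ℕ := sInf {r : ℕ | ¬ ssHasNontrivial m d r}

/-- Left-hand side of the reduced polynomial equation indexed by `ρ`:
`∑ i ∑_{α₄+2α₅=ρ} (1/(α₄! α₅!)) p_i² q_{4i}^{α₄} q_{5i}^{α₅}`. -/
def redLHS {m : ℕ} (p q4 q5 : Fin m → ℝ) (ρ : ℕ) : ℝ :=
  ∑ i : Fin m, ∑ α4 ∈ Finset.range (ρ + 1), ∑ α5 ∈ Finset.range (ρ + 1),
    if α4 + 2 * α5 = ρ then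
      (1 / ((Nat.factorial α4 : ℝ) * (Nat.factorial α5 : ℝ))) *
        p i ^ 2 * q4 i ^ α4 * q5 i ^ α5
    else 0

/-! ### Auxiliary development -/

open Finset Filter

/-- Coefficient `e_ρ(u,v) = ∑_{α₄+2α₅=ρ} u^{α₄} v^{α₅}/(α₄! α₅!)`. -/
def ered (u v : ℝ) (ρ : ℕ) : ℝ :=
  ∑ α4 ∈ Finset.range (ρ + 1), ∑ α5 ∈ Finset.range (ρ + 1),
    if α4 + 2 * α5 = ρ then
      (1 / ((Nat.factorial α4 : ℝ) * (Nat.factorial α5 : ℝ))) * u ^ α4 * v ^ α5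
    else 0

lemma redLHS_eq_sum_ered {m : ℕ} (p q4 q5 : Fin m → ℝ) (ρ : ℕ) :
    redLHS p q4 q5 ρ = ∑ i : Fin m, p i ^ 2 * ered (q4 i) (q5 i) ρ := by
  unfold redLHS ered
  refine Finset.sum_congr rfl fun i _ => ?_
  rw [Finset.mul_sum]
  refine Finset.sum_congr rfl fun α4 _ => ?_
  rw [Finset.mul_sum]
  refine Finset.sum_congr rfl fun α5 _ => ?_
  split <;> ring

lemma redLHS_zero {m : ℕ} (p q4 q5 : Fin m → ℝ) :
    redLHS p q4 q5 0 = ∑ i : Fin m, p i ^ 2 := by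
  simp [redLHS, Nat.factorial]

/-- `exp(u t)` as a power series in `t`. -/
lemma hasSum_exp_lin (u t : ℝ) :
    HasSum (fun k : ℕ => u ^ k * t ^ k / (Nat.factorial k : ℝ)) (Real.exp (u * t)) := by
  have := NormedSpace.expSeries_div_hasSum_exp (u * t)
  rw [← Real.exp_eq_exp_ℝ] at this
  simpa [mul_pow] using this

/-- `exp(v t²)` as a power series in `t` (with only even powers). -/
lemma hasSum_exp_quad (v t : ℝ) :
    HasSum (fun l : ℕ => if Even l then v ^ (l / 2) * t ^ l / (Nat.factorial (l / 2) : ℝ) else 0)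
      (Real.exp (v * t ^ 2)) := by
  set f : ℕ → ℝ := fun l =>
    if Even l then v ^ (l / 2) * t ^ l / (Nat.factorial (l / 2) : ℝ) else 0 with hfdef
  have h2 : Function.Injective (fun j : ℕ => 2 * j) := fun a b h => by
    have : 2 * a = 2 * b := h
    omega
  have hside : ∀ x ∉ Set.range (fun j : ℕ => 2 * j), f x = 0 := by
    intro l hl
    rw [hfdef]
    simp only
    rw [if_neg]
    rintro ⟨m, hm⟩
    exact hl ⟨m, show 2 * m = l by omega⟩
  rw [← Function.Injective.hasSum_iff h2 hside]
  have base := NormedSpace.expSeries_div_hasSum_exp (v * t ^ 2)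
  rw [← Real.exp_eq_exp_ℝ] at base
  have heq : (f ∘ fun j : ℕ => 2 * j)
      = fun j : ℕ => (v * t ^ 2) ^ j / (Nat.factorial j : ℝ) := by
    funext j
    simp only [Function.comp, hfdef, if_pos (even_two_mul j),
      Nat.mul_div_cancel_left j (by norm_num : 0 < 2)]
    ring
  rw [heq]
  exact base

lemma fiber_sum (u v t : ℝ) (n : ℕ) :
    ∑ kl ∈ Finset.HasAntidiagonal.antidiagonal n,
      (if Even kl.1 then v ^ (kl.1 / 2) * t ^ kl.1 / (Nat.factorial (kl.1 / 2) : ℝ) else 0) *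
        (u ^ kl.2 * t ^ kl.2 / (Nat.factorial kl.2 : ℝ))
      = ered u v n * t ^ n := by
  rw [Finset.Nat.sum_antidiagonal_eq_sum_range_succ_mk]
  -- LHS : ∑ k ∈ range (n+1), (if Even k then ...) * (u^(n-k) t^(n-k)/(n-k)!)
  -- RHS : expand ered, swap sums, collapse the α4 sum
  have hered : ered u v n = ∑ α5 ∈ Finset.range (n + 1),
      if 2 * α5 ≤ n then
        (1 / ((Nat.factorial (n - 2 * α5) : ℝ) * (Nat.factorial α5 : ℝ))) *
          u ^ (n - 2 * α5) * v ^ α5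
      else 0 := by
    unfold ered
    rw [Finset.sum_comm]
    refine Finset.sum_congr rfl fun α5 _ => ?_
    by_cases h : 2 * α5 ≤ n
    · rw [if_pos h, Finset.sum_eq_single (n - 2 * α5)]
      · rw [if_pos (by omega)]
      · intro b _ hb
        rw [if_neg (by omega)]
      · intro hmem
        exact absurd (Finset.mem_range.mpr (by omega)) hmem
    · rw [if_neg h]
      refine Finset.sum_eq_zero fun α4 _ => ?_
      rw [if_neg (by omega)]
  rw [hered, Finset.sum_mul]
  simp only [ite_mul, zero_mul]
  rw [← Finset.sum_filter, ← Finset.sum_filter]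
  refine Finset.sum_nbij' (fun k => k / 2) (fun α5 => 2 * α5) ?_ ?_ ?_ ?_ ?_
  · intro a ha
    beta_reduce
    simp only [Finset.mem_filter, Finset.mem_range] at ha ⊢
    obtain ⟨m, hm⟩ := ha.2
    omega
  · intro a ha
    beta_reduce
    simp only [Finset.mem_filter, Finset.mem_range] at ha ⊢
    exact ⟨by omega, ⟨a, by omega⟩⟩
  · intro a ha
    beta_reduce
    simp only [Finset.mem_filter, Finset.mem_range] at ha
    obtain ⟨m, hm⟩ := ha.2
    omega
  · intro a _
    beta_reduce
    omega
  · intro k hk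
    beta_reduce
    simp only [Finset.mem_filter, Finset.mem_range] at hk
    obtain ⟨hk1, m, hm⟩ := hk
    subst hm
    have h2 : (m + m) / 2 = m := by omega
    simp only [h2]
    rw [two_mul m]
    have hfac1 : (Nat.factorial (n - (m + m)) : ℝ) ≠ 0 :=
      Nat.cast_ne_zero.mpr (Nat.factorial_ne_zero _)
    have hfac2 : (Nat.factorial m : ℝ) ≠ 0 := Nat.cast_ne_zero.mpr (Nat.factorial_ne_zero _)
    have htpow : t ^ (m + m) * t ^ (n - (m + m)) = t ^ n := by
      rw [← pow_add]; congr 1; omega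
    field_simp
    rw [← htpow]
    ring

/-- Key analytic fact: `∑ ρ, e_ρ(u,v) tᵖ = exp(u t + v t²)`. -/
lemma hasSum_ered (u v t : ℝ) :
    HasSum (fun ρ : ℕ => ered u v ρ * t ^ ρ) (Real.exp (u * t + v * t ^ 2)) := by
  set f : ℕ → ℝ := fun l => if Even l then v ^ (l / 2) * t ^ l / (Nat.factorial (l / 2) : ℝ) else 0
  set g : ℕ → ℝ := fun k => u ^ k * t ^ k / (Nat.factorial k : ℝ)
  have hf : HasSum f (Real.exp (v * t ^ 2)) := hasSum_exp_quad v t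
  have hg : HasSum g (Real.exp (u * t)) := hasSum_exp_lin u t
  have hfn : Summable fun l => ‖f l‖ := by
    have := hasSum_exp_quad |v| |t|
    refine this.summable.congr fun l => ?_
    simp only [f]
    split
    · rw [Real.norm_eq_abs, abs_div, abs_mul, abs_pow, abs_pow,
        Nat.abs_cast]
    · simp
  have hgn : Summable fun k => ‖g k‖ := by
    have := hasSum_exp_lin |u| |t|
    refine this.summable.congr fun k => ?_
    simp only [g]
    rw [Real.norm_eq_abs, abs_div, abs_mul, abs_pow, abs_pow, Nat.abs_cast]
  have hsum : Summable fun n => ∑ kl ∈ Finset.HasAntidiagonal.antidiagonal n, f kl.1 * g kl.2 :=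
    (summable_norm_sum_mul_antidiagonal_of_summable_norm hfn hgn).of_norm
  have htsum : Real.exp (v * t ^ 2) * Real.exp (u * t)
      = ∑' n, ∑ kl ∈ Finset.HasAntidiagonal.antidiagonal n, f kl.1 * g kl.2 := by
    rw [← hf.tsum_eq, ← hg.tsum_eq]
    exact tsum_mul_tsum_eq_tsum_sum_antidiagonal_of_summable_norm hfn hgn
  have hexp : Real.exp (u * t + v * t ^ 2) = Real.exp (v * t ^ 2) * Real.exp (u * t) := by
    rw [← Real.exp_add]; ring_nf
  have h1 : HasSum (fun n => ∑ kl ∈ Finset.HasAntidiagonal.antidiagonal n, f kl.1 * g kl.2)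
      (Real.exp (u * t + v * t ^ 2)) := by
    rw [hexp, htsum]
    exact hsum.hasSum
  have hFeq : (fun n => ∑ kl ∈ Finset.HasAntidiagonal.antidiagonal n, f kl.1 * g kl.2)
      = fun ρ => ered u v ρ * t ^ ρ := funext fun n => fiber_sum u v t n
  exact hFeq ▸ h1

lemma const_of_red_eq_zero {m : ℕ} (p q4 q5 : Fin m → ℝ)
    (h : ∀ ρ : ℕ, 1 ≤ ρ → redLHS p q4 q5 ρ = 0) (t : ℝ) :
    ∑ i : Fin m, p i ^ 2 * Real.exp (q4 i * t + q5 i * t ^ 2) = ∑ i : Fin m, p i ^ 2 := by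
  have h1 : HasSum (fun n : ℕ => ∑ i : Fin m, p i ^ 2 * (ered (q4 i) (q5 i) n * t ^ n))
      (∑ i : Fin m, p i ^ 2 * Real.exp (q4 i * t + q5 i * t ^ 2)) :=
    hasSum_sum fun i _ => (hasSum_ered (q4 i) (q5 i) t).mul_left (p i ^ 2)
  have heq : (fun n : ℕ => ∑ i : Fin m, p i ^ 2 * (ered (q4 i) (q5 i) n * t ^ n))
      = fun n : ℕ => redLHS p q4 q5 n * t ^ n := by
    funext n
    rw [redLHS_eq_sum_ered, Finset.sum_mul]
    exact Finset.sum_congr rfl fun i _ => (mul_assoc _ _ _).symm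
  rw [heq] at h1
  have h0 : HasSum (fun n : ℕ => redLHS p q4 q5 n * t ^ n) (∑ i : Fin m, p i ^ 2) := by
    have heq2 : (fun n : ℕ => redLHS p q4 q5 n * t ^ n)
        = fun n : ℕ => if n = 0 then ∑ i : Fin m, p i ^ 2 else 0 := by
      funext n
      rcases Nat.eq_zero_or_pos n with rfl | hn
      · simp [redLHS_zero]
      · rw [h n hn, if_neg (by omega), zero_mul]
    rw [heq2]
    exact hasSum_ite_eq 0 _
  exact h1.unique h0

lemma tendsto_phi_atTop {u v : ℝ} (h : 0 < v ∨ (v = 0 ∧ 0 < u)) :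
    Tendsto (fun t : ℝ => u * t + v * t ^ 2) atTop atTop := by
  rcases h with hv | ⟨hv, hu⟩
  · have h1 : Tendsto (fun t : ℝ => u + v * t) atTop atTop :=
      tendsto_atTop_add_const_left atTop u (Tendsto.const_mul_atTop hv tendsto_id)
    have h2 : Tendsto (fun t : ℝ => t * (u + v * t)) atTop atTop :=
      Tendsto.atTop_mul_atTop₀ tendsto_id h1
    exact h2.congr fun t => by ring
  · subst hv
    have h1 : Tendsto (fun t : ℝ => u * t) atTop atTop :=
      Tendsto.const_mul_atTop hu tendsto_id
    exact h1.congr fun t => by ring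

lemma tendsto_phi_atBot {u v : ℝ} (h : v < 0 ∨ (v = 0 ∧ u < 0)) :
    Tendsto (fun t : ℝ => u * t + v * t ^ 2) atTop atBot := by
  rcases h with hv | ⟨hv, hu⟩
  · have h1 : Tendsto (fun t : ℝ => u + v * t) atTop atBot :=
      tendsto_atBot_add_const_left atTop u ((tendsto_const_mul_atBot_of_neg hv).mpr tendsto_id)
    have h2 : Tendsto (fun t : ℝ => t * (u + v * t)) atTop atBot :=
      Tendsto.atTop_mul_atBot₀ tendsto_id h1
    exact h2.congr fun t => by ring
  · subst hv
    have h1 : Tendsto (fun t : ℝ => u * t) atTop atBot :=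
      (tendsto_const_mul_atBot_of_neg hu).mpr tendsto_id
    exact h1.congr fun t => by ring

lemma no_infinite_solution (p q4 q5 : Fin 3 → ℝ) (hp : ∀ i, p i ≠ 0) (k : Fin 3) (hk : q4 k ≠ 0)
    (h : ∀ t : ℝ, ∑ i : Fin 3, p i ^ 2 * Real.exp (q4 i * t + q5 i * t ^ 2)
      = ∑ i : Fin 3, p i ^ 2) :
    False := by
  have hA : ∀ i : Fin 3, 0 < p i ^ 2 := fun i =>
    lt_of_le_of_ne (sq_nonneg (p i)) (Ne.symm (pow_ne_zero 2 (hp i)))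
  by_cases hex : ∃ i, 0 < q5 i ∨ (q5 i = 0 ∧ 0 < q4 i)
  · obtain ⟨i, hi⟩ := hex
    have hterm : Tendsto (fun t : ℝ => p i ^ 2 * Real.exp (q4 i * t + q5 i * t ^ 2))
        atTop atTop :=
      Tendsto.const_mul_atTop (hA i) (Real.tendsto_exp_atTop.comp (tendsto_phi_atTop hi))
    obtain ⟨t, ht⟩ := (hterm.eventually_gt_atTop (∑ j : Fin 3, p j ^ 2)).exists
    have hle : p i ^ 2 * Real.exp (q4 i * t + q5 i * t ^ 2)
        ≤ ∑ j : Fin 3, p j ^ 2 * Real.exp (q4 j * t + q5 j * t ^ 2) :=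
      Finset.single_le_sum (f := fun j => p j ^ 2 * Real.exp (q4 j * t + q5 j * t ^ 2))
        (fun j _ => by positivity) (Finset.mem_univ i)
    rw [h t] at hle
    linarith
  · push_neg at hex
    set L : Fin 3 → ℝ := fun i => if q4 i = 0 ∧ q5 i = 0 then p i ^ 2 else 0 with hL
    have hten : ∀ i : Fin 3,
        Tendsto (fun t : ℝ => p i ^ 2 * Real.exp (q4 i * t + q5 i * t ^ 2)) atTop (nhds (L i)) := by
      intro i
      obtain ⟨h5, h45⟩ := hex i
      rcases lt_or_eq_of_le h5 with h5lt | h5eq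
      · have hzero : Tendsto (fun t : ℝ => p i ^ 2 * Real.exp (q4 i * t + q5 i * t ^ 2))
            atTop (nhds (p i ^ 2 * 0)) :=
          Tendsto.const_mul _ (Real.tendsto_exp_atBot.comp (tendsto_phi_atBot (Or.inl h5lt)))
        have : L i = p i ^ 2 * 0 := by
          rw [hL]; simp only; rw [if_neg (fun hc => absurd hc.2 (ne_of_lt h5lt))]; ring
        rw [this]
        exact hzero
      · have h5eq' : q5 i = 0 := h5eq
        have h4 : q4 i ≤ 0 := h45 h5eq'
        rcases lt_or_eq_of_le h4 with h4lt | h4eq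
        · have hzero : Tendsto (fun t : ℝ => p i ^ 2 * Real.exp (q4 i * t + q5 i * t ^ 2))
              atTop (nhds (p i ^ 2 * 0)) :=
            Tendsto.const_mul _ (Real.tendsto_exp_atBot.comp
              (tendsto_phi_atBot (Or.inr ⟨h5eq', h4lt⟩)))
          have : L i = p i ^ 2 * 0 := by
            rw [hL]; simp only; rw [if_neg (fun hc => absurd hc.1 (ne_of_lt h4lt))]; ring
          rw [this]
          exact hzero
        · have h4eq' : q4 i = 0 := h4eq
          have : L i = p i ^ 2 := by rw [hL]; simp only; rw [if_pos ⟨h4eq', h5eq'⟩]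
          rw [this]
          refine Tendsto.congr (fun t => ?_) tendsto_const_nhds
          rw [h4eq', h5eq']
          simp
    have hsum : Tendsto (fun t : ℝ => ∑ i : Fin 3, p i ^ 2 * Real.exp (q4 i * t + q5 i * t ^ 2))
        atTop (nhds (∑ i : Fin 3, L i)) := tendsto_finset_sum _ fun i _ => hten i
    have hconst : Tendsto
        (fun t : ℝ => ∑ i : Fin 3, p i ^ 2 * Real.exp (q4 i * t + q5 i * t ^ 2))
        atTop (nhds (∑ i : Fin 3, p i ^ 2)) :=
      Tendsto.congr (fun t => (h t).symm) tendsto_const_nhds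
    have huniq : (∑ i : Fin 3, L i) = ∑ i : Fin 3, p i ^ 2 := tendsto_nhds_unique hsum hconst
    have hlt : (∑ i : Fin 3, L i) < ∑ i : Fin 3, p i ^ 2 := by
      refine Finset.sum_lt_sum (fun i _ => ?_) ⟨k, Finset.mem_univ k, ?_⟩
      · rw [hL]; simp only; split
        · exact le_refl _
        · exact le_of_lt (hA i)
      · rw [hL]; simp only; rw [if_neg (fun hc => hk hc.1)]
        exact hA k
    linarith

/-! ### Polynomial encoding and Noetherian stabilization -/

open MvPolynomial in
def Pred (ρ : ℕ) : MvPolynomial (Fin 3 × Fin 3) ℝ :=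
  ∑ i : Fin 3, ∑ α4 ∈ Finset.range (ρ + 1), ∑ α5 ∈ Finset.range (ρ + 1),
    if α4 + 2 * α5 = ρ then
      (C (1 / ((Nat.factorial α4 : ℝ) * (Nat.factorial α5 : ℝ))) : MvPolynomial (Fin 3 × Fin 3) ℝ)
        * X (0, i) ^ 2 * X (1, i) ^ α4 * X (2, i) ^ α5
    else 0

lemma eval_Pred (x : Fin 3 × Fin 3 → ℝ) (ρ : ℕ) :
    MvPolynomial.eval x (Pred ρ)
      = redLHS (fun i => x (0, i)) (fun i => x (1, i)) (fun i => x (2, i)) ρ := by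
  unfold Pred redLHS
  rw [map_sum]
  refine Finset.sum_congr rfl fun i _ => ?_
  rw [map_sum]
  refine Finset.sum_congr rfl fun α4 _ => ?_
  rw [map_sum]
  refine Finset.sum_congr rfl fun α5 _ => ?_
  split
  · simp
  · simp

lemma mdeg_zero {d : ℕ} : mdeg (0 : Fin d → ℕ) = 0 := by simp [mdeg]

lemma mIdxBox_zero {d : ℕ} : mIdxBox (0 : Fin d → ℕ) = {0} := by
  ext α
  simp [mIdxBox, Fintype.mem_piFinset, Nat.lt_one_iff, funext_iff]

lemma mpow_zero_left {d : ℕ} (α : Fin d → ℕ) {j : Fin d} (hj : α j ≠ 0) :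
    mpow (0 : Fin d → ℝ) α = 0 :=
  Finset.prod_eq_zero (Finset.mem_univ j) (by simp [zero_pow hj])

lemma ssLHS_rho1_zero {m d : ℕ} (p : Fin m → ℝ) (q1 : Fin m → Fin d → ℝ) (q2 : Fin d → ℝ)
    (q3 : Fin m → Fin d → ℝ) (q4 q5 : Fin m → ℝ) (ρ2 : ℕ) :
    ssLHS p q1 q2 q3 q4 q5 0 ρ2 = redLHS p q4 q5 ρ2 := by
  unfold ssLHS redLHS
  rw [mIdxBox_zero]
  simp only [Finset.sum_singleton]
  refine Finset.sum_congr rfl fun i _ => Finset.sum_congr rfl fun α4 _ =>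
    Finset.sum_congr rfl fun α5 _ => ?_
  have hcond : ((0 : Fin d → ℕ) + 0 + 0 = 0 ∧ mdeg (0 : Fin d → ℕ) + α4 + 2 * α5 = ρ2)
      ↔ (α4 + 2 * α5 = ρ2) := by
    simp [mdeg_zero]
  rw [if_congr hcond rfl rfl]
  split
  · have h1 : mpow (q1 i) 0 = 1 := by simp [mpow]
    have h2 : mpow q2 0 = 1 := by simp [mpow]
    have h3 : mpow (q3 i) 0 = 1 := by simp [mpow]
    have h4 : mfact (0 : Fin d → ℕ) = 1 := by simp [mfact]
    rw [h1, h2, h3, h4]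
    push_cast
    ring
  · rfl

lemma ssLHS_qzero {m d : ℕ} (p : Fin m → ℝ) (q4 q5 : Fin m → ℝ) (ρ1 : Fin d → ℕ)
    (hρ1 : ρ1 ≠ 0) (ρ2 : ℕ) : ssLHS p 0 0 0 q4 q5 ρ1 ρ2 = 0 := by
  unfold ssLHS
  refine Finset.sum_eq_zero fun i _ => Finset.sum_eq_zero fun α1 _ =>
    Finset.sum_eq_zero fun α2 _ => Finset.sum_eq_zero fun α3 _ =>
    Finset.sum_eq_zero fun α4 _ => Finset.sum_eq_zero fun α5 _ => ?_
  split
  case isTrue hcond =>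
    obtain ⟨hsum, -⟩ := hcond
    obtain ⟨j, hj⟩ : ∃ j, ρ1 j ≠ 0 := by
      by_contra hcontra
      push_neg at hcontra
      exact hρ1 (funext hcontra)
    have hsj : α1 j + α2 j + α3 j = ρ1 j := by
      have := congrFun hsum j
      simpa using this
    have hcase : α1 j ≠ 0 ∨ α2 j ≠ 0 ∨ α3 j ≠ 0 := by omega
    rcases hcase with h | h | h
    · rw [show mpow ((0 : Fin m → Fin d → ℝ) i) α1 = mpow (0 : Fin d → ℝ) α1 from rfl,
        mpow_zero_left α1 h]
      ring
    · rw [show mpow (0 : Fin d → ℝ) α2 = 0 from mpow_zero_left α2 h]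
      ring
    · rw [show mpow ((0 : Fin m → Fin d → ℝ) i) α3 = mpow (0 : Fin d → ℝ) α3 from rfl,
        mpow_zero_left α3 h]
      ring
  case isFalse => rfl

lemma exists_no_nontrivial (d : ℕ) : ∃ r : ℕ, ¬ ssHasNontrivial 3 d r := by
  have inst : IsNoetherian (MvPolynomial (Fin 3 × Fin 3) ℝ) (MvPolynomial (Fin 3 × Fin 3) ℝ) :=
    inferInstanceAs (IsNoetherianRing (MvPolynomial (Fin 3 × Fin 3) ℝ))
  set J : ℕ →o Ideal (MvPolynomial (Fin 3 × Fin 3) ℝ) :=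
    ⟨fun r => Ideal.span (Pred '' Set.Icc 1 r), fun a b hab =>
      Ideal.span_mono (Set.image_mono (Set.Icc_subset_Icc_right hab))⟩ with hJdef
  obtain ⟨N, hN⟩ := monotone_stabilizes_iff_noetherian.mpr inst J
  refine ⟨N, ?_⟩
  rintro ⟨p, q1, q2, q3, q4, q5, hp, ⟨k, hk⟩, heq⟩
  have hred : ∀ ρ, 1 ≤ ρ → ρ ≤ N → redLHS p q4 q5 ρ = 0 := by
    intro ρ h1 h2
    have := heq 0 ρ (by rw [mdeg_zero]; omega) (by rw [mdeg_zero]; omega)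
    rwa [ssLHS_rho1_zero] at this
  set x : Fin 3 × Fin 3 → ℝ := fun z => ![p, q4, q5] z.1 z.2 with hx
  have hx0 : (fun i => x (0, i)) = p := by funext i; simp [hx]
  have hx1 : (fun i => x (1, i)) = q4 := by funext i; simp [hx]
  have hx2 : (fun i => x (2, i)) = q5 := by funext i; simp [hx]
  have hallred : ∀ ρ : ℕ, 1 ≤ ρ → redLHS p q4 q5 ρ = 0 := by
    intro ρ h1
    have hmem : Pred ρ ∈ J N := by
      have h1' : Pred ρ ∈ J (max N ρ) :=
        Ideal.subset_span ⟨ρ, ⟨h1, le_max_right _ _⟩, rfl⟩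
      rwa [← hN (max N ρ) (le_max_left _ _)] at h1'
    have hkerle : J N ≤ RingHom.ker (MvPolynomial.eval x) := by
      rw [hJdef]
      change Ideal.span (Pred '' Set.Icc 1 N) ≤ _
      rw [Ideal.span_le]
      rintro _ ⟨ρ', ⟨hρ1, hρN⟩, rfl⟩
      simp only [SetLike.mem_coe, RingHom.mem_ker]
      rw [eval_Pred, hx0, hx1, hx2]
      exact hred ρ' hρ1 hρN
    have hz := hkerle hmem
    rw [RingHom.mem_ker, eval_Pred, hx0, hx1, hx2] at hz
    exact hz
  exact no_infinite_solution p q4 q5 hp k hk (const_of_red_eq_zero p q4 q5 hallred)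

/-! ### The explicit non-trivial solution up to order 5 -/

lemma red_eval (c e : ℝ) (h2 : 1 + 2 * c + e = 0) (h4 : 1 / 12 + c + c ^ 2 + e ^ 2 / 2 = 0) :
    ∀ ρ : ℕ, 1 ≤ ρ → ρ ≤ 5 → redLHS ![1, 1, 1] ![1, -1, 0] ![c, c, e] ρ = 0 := by
  intro ρ h1 h5
  interval_cases ρ
  · simp only [redLHS, Fin.sum_univ_three, Finset.sum_range_succ, Finset.sum_range_zero, Matrix.cons_val]
    norm_num [Nat.factorial]
  · simp only [redLHS, Fin.sum_univ_three, Finset.sum_range_succ, Finset.sum_range_zero, Matrix.cons_val]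
    norm_num [Nat.factorial]
    linear_combination h2
  · simp only [redLHS, Fin.sum_univ_three, Finset.sum_range_succ, Finset.sum_range_zero, Matrix.cons_val]
    norm_num [Nat.factorial]
    ring
  · simp only [redLHS, Fin.sum_univ_three, Finset.sum_range_succ, Finset.sum_range_zero, Matrix.cons_val]
    norm_num [Nat.factorial]
    linear_combination h4
  · simp only [redLHS, Fin.sum_univ_three, Finset.sum_range_succ, Finset.sum_range_zero, Matrix.cons_val]
    norm_num [Nat.factorial]
    ring

lemma witness_exists : ∃ p q4 q5 : Fin 3 → ℝ,
    (∀ i, p i ≠ 0) ∧ (∃ i, q4 i ≠ 0) ∧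
    ∀ ρ : ℕ, 1 ≤ ρ → ρ ≤ 5 → redLHS p q4 q5 ρ = 0 := by
  have hs : Real.sqrt 2 ^ 2 = 2 := Real.sq_sqrt (by norm_num)
  refine ⟨![1, 1, 1], ![1, -1, 0], ![(Real.sqrt 2 - 3) / 6, (Real.sqrt 2 - 3) / 6,
    -(Real.sqrt 2) / 3], ?_, ⟨0, by norm_num⟩, red_eval _ _ (by ring) (by linear_combination hs / 12)⟩
  intro i; fin_cases i <;> norm_num

/-- There exist reals `p₁,p₂,p₃, q₄₁,q₄₂,q₄₃, q₅₁,q₅₂,q₅₃` with all `pᵢ ≠ 0` and some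
`q₄ᵢ ≠ 0` satisfying the reduced equations for every `ρ ∈ {1,…,5}`; in particular
(taking `q₁ᵢ = q₂ = q₃ᵢ = 0`) the Softmax–Softmax polynomial system of order `r = 5`
with `m = 3` blocks admits a non-trivial solution for every `d ≥ 1`, so `r^SS(3) > 5`. -/
theorem rSS_three_gt_five :
    (∃ p q4 q5 : Fin 3 → ℝ,
      (∀ i, p i ≠ 0) ∧ (∃ i, q4 i ≠ 0) ∧
      ∀ ρ : ℕ, 1 ≤ ρ → ρ ≤ 5 → redLHS p q4 q5 ρ = 0) ∧
    (∀ d : ℕ, 1 ≤ d → ssHasNontrivial 3 d 5 ∧ 5 < rSS 3 d) := by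
  obtain ⟨pw, q4w, q5w, hpw, hq4w, hredw⟩ := witness_exists
  refine ⟨⟨pw, q4w, q5w, hpw, hq4w, hredw⟩, ?_⟩
  intro d _
  have hhas : ∀ r : ℕ, r ≤ 5 → ssHasNontrivial 3 d r := by
    intro r hr
    refine ⟨pw, 0, 0, 0, q4w, q5w, hpw, hq4w, ?_⟩
    intro ρ1 ρ2 h1 h2
    rcases eq_or_ne ρ1 0 with rfl | hne
    · rw [ssLHS_rho1_zero]
      rw [mdeg_zero] at h1 h2
      exact hredw ρ2 (by omega) (by omega)
    · exact ssLHS_qzero pw q4w q5w ρ1 hne ρ2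
  refine ⟨hhas 5 le_rfl, ?_⟩
  have hne : {r : ℕ | ¬ ssHasNontrivial 3 d r}.Nonempty := exists_no_nontrivial d
  have hmem := Nat.sInf_mem hne
  by_contra hcon
  push_neg at hcon
  exact hmem (hhas _ hcon)
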